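/- Let (M, d) be a finite metric space, k ≥ 1, and let P_1, …, P_t be probability mass functions on M. For every 1 ≤ i ≤ t+1, the dynamic-programming value function V_i is 1-Lipschitz with respect to the matching distance: for all configurations A and B, |V_i(A) − V_i(B)| ≤ D(A, B). -/

import Mathlib

/-- The matching distance between two configurations of `k` servers. -/
noncomputable def matchDist {M : Type*} [MetricSpace M] {k : ℕ} (A B : Fin k → M) : ℝ :=
  ⨅ σ : Equiv.Perm (Fin k), ∑ j, dist (A j) (B (σ j))

/-- The dynamic-programming value function for the stochastic `k`-server problem:
`dpVal [P_i, …, P_t] B = V_i(B)`, where `V_{t+1}(B) = 0` and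
`V_i(B) = ∑_r P_i(r) · min over configurations A serving r of (D(B, A) + V_{i+1}(A))`. -/
noncomputable def dpVal {M : Type*} [MetricSpace M] [Fintype M] {k : ℕ} :
    List (M → ℝ) → (Fin k → M) → ℝ
  | [], _ => 0
  | P :: Ps, B => ∑ r : M, P r *
      sInf {c | ∃ A : Fin k → M, (∃ j, r = A j) ∧ c = matchDist B A + dpVal Ps A}

section Aux

variable {M : Type*} [MetricSpace M] {k : ℕ}

lemma matchDist_le_sum (A B : Fin k → M) (σ : Equiv.Perm (Fin k)) :
    matchDist A B ≤ ∑ j, dist (A j) (B (σ j)) :=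
  ciInf_le (Set.Finite.bddBelow (Set.finite_range _)) σ

lemma matchDist_nonneg (A B : Fin k → M) : 0 ≤ matchDist A B :=
  Real.iInf_nonneg fun _ => Finset.sum_nonneg fun _ _ => dist_nonneg

lemma matchDist_symm (A B : Fin k → M) : matchDist A B = matchDist B A := by
  have key : ∀ C D : Fin k → M, matchDist C D ≤ matchDist D C := by
    intro C D
    refine le_ciInf fun σ => ?_
    refine (matchDist_le_sum C D σ⁻¹).trans_eq ?_
    have := Equiv.sum_comp σ (fun j => dist (C j) (D (σ⁻¹ j)))
    rw [← this]
    simp [dist_comm]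
  exact le_antisymm (key A B) (key B A)

lemma matchDist_triangle (A B C : Fin k → M) :
    matchDist A C ≤ matchDist A B + matchDist B C := by
  refine le_ciInf_add_ciInf fun σ τ => ?_
  calc matchDist A C ≤ ∑ j, dist (A j) (C ((σ.trans τ) j)) := matchDist_le_sum A C _
    _ ≤ ∑ j, (dist (A j) (B (σ j)) + dist (B (σ j)) (C (τ (σ j)))) :=
        Finset.sum_le_sum fun j _ => dist_triangle _ _ _
    _ = ∑ j, dist (A j) (B (σ j)) + ∑ j, dist (B (σ j)) (C (τ (σ j))) :=
        Finset.sum_add_distrib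
    _ = ∑ j, dist (A j) (B (σ j)) + ∑ j, dist (B j) (C (τ j)) := by
        rw [Equiv.sum_comp σ (fun j => dist (B j) (C (τ j)))]

variable [Fintype M]

lemma dpVal_nonneg (Ps : List (M → ℝ)) (h0 : ∀ P ∈ Ps, ∀ r, 0 ≤ P r)
    (B : Fin k → M) : 0 ≤ dpVal Ps B := by
  induction Ps generalizing B with
  | nil => simp [dpVal]
  | cons P Ps ih =>
    refine Finset.sum_nonneg fun r _ => mul_nonneg (h0 P List.mem_cons_self r) ?_
    refine Real.sInf_nonneg fun c hc => ?_
    obtain ⟨A, -, rfl⟩ := hc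
    exact add_nonneg (matchDist_nonneg _ _) (ih (fun Q hQ => h0 Q (List.mem_cons_of_mem _ hQ)) A)

lemma serveSet_nonempty (hk : 1 ≤ k) (Ps : List (M → ℝ)) (r : M) (B : Fin k → M) :
    {c | ∃ A : Fin k → M, (∃ j, r = A j) ∧ c = matchDist B A + dpVal Ps A}.Nonempty := by
  refine ⟨_, Function.update B ⟨0, hk⟩ r, ⟨⟨0, hk⟩, ?_⟩, rfl⟩
  simp

lemma serveSet_bddBelow (Ps : List (M → ℝ)) (h0 : ∀ P ∈ Ps, ∀ r, 0 ≤ P r) (r : M)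
    (B : Fin k → M) :
    BddBelow {c | ∃ A : Fin k → M, (∃ j, r = A j) ∧ c = matchDist B A + dpVal Ps A} := by
  refine ⟨0, fun c hc => ?_⟩
  obtain ⟨A, -, rfl⟩ := hc
  exact add_nonneg (matchDist_nonneg _ _) (dpVal_nonneg Ps h0 A)

lemma sInf_step (hk : 1 ≤ k) (Ps : List (M → ℝ)) (h0 : ∀ P ∈ Ps, ∀ r, 0 ≤ P r)
    (r : M) (A B : Fin k → M) :
    sInf {c | ∃ C : Fin k → M, (∃ j, r = C j) ∧ c = matchDist A C + dpVal Ps C} ≤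
      matchDist A B +
        sInf {c | ∃ C : Fin k → M, (∃ j, r = C j) ∧ c = matchDist B C + dpVal Ps C} := by
  rw [← sub_le_iff_le_add']
  refine le_csInf (serveSet_nonempty hk Ps r B) fun c hc => ?_
  obtain ⟨C, hrC, rfl⟩ := hc
  have h1 : sInf {c | ∃ C : Fin k → M, (∃ j, r = C j) ∧ c = matchDist A C + dpVal Ps C} ≤
      matchDist A C + dpVal Ps C :=
    csInf_le (serveSet_bddBelow Ps h0 r A) ⟨C, hrC, rfl⟩
  have h2 := matchDist_triangle A B C
  linarith

lemma dpVal_sub_le (hk : 1 ≤ k) (Ps : List (M → ℝ)) (h0 : ∀ P ∈ Ps, ∀ r, 0 ≤ P r)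
    (h1 : ∀ P ∈ Ps, ∑ r : M, P r = 1) (A B : Fin k → M) :
    dpVal Ps A - dpVal Ps B ≤ matchDist A B := by
  cases Ps with
  | nil => simpa [dpVal] using matchDist_nonneg A B
  | cons P Ps =>
    have hPmem : P ∈ P :: Ps := List.mem_cons_self
    have h0' : ∀ Q ∈ Ps, ∀ r, 0 ≤ Q r := fun Q hQ => h0 Q (List.mem_cons_of_mem _ hQ)
    show (∑ r : M, P r * _) - (∑ r : M, P r * _) ≤ matchDist A B
    rw [← Finset.sum_sub_distrib]
    calc (∑ r : M, (P r * sInf {c | ∃ C : Fin k → M, (∃ j, r = C j) ∧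
              c = matchDist A C + dpVal Ps C} -
            P r * sInf {c | ∃ C : Fin k → M, (∃ j, r = C j) ∧
              c = matchDist B C + dpVal Ps C}))
        ≤ ∑ r : M, P r * matchDist A B := by
          refine Finset.sum_le_sum fun r _ => ?_
          rw [← mul_sub]
          refine mul_le_mul_of_nonneg_left ?_ (h0 P hPmem r)
          have := sInf_step hk Ps h0' r A B
          linarith
      _ = matchDist A B := by rw [← Finset.sum_mul, h1 P hPmem, one_mul]

end Aux

/-- for every `1 ≤ i ≤ t + 1` the value function `V_i` (here
`dpVal` of the list of remaining distributions `P_i, …, P_t`, i.e. the drop of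
the full list) is 1-Lipschitz with respect to the matching distance. -/
theorem dpVal_lipschitz {M : Type*} [MetricSpace M] [Fintype M] {k t : ℕ} (hk : 1 ≤ k)
    (P : Fin t → M → ℝ) (hP0 : ∀ i r, 0 ≤ P i r) (hP1 : ∀ i, ∑ r : M, P i r = 1) :
    ∀ i : ℕ, i ≤ t → ∀ A B : Fin k → M,
      |dpVal ((List.ofFn P).drop i) A - dpVal ((List.ofFn P).drop i) B| ≤ matchDist A B := by
  intro i _ A B
  have h0 : ∀ Q ∈ (List.ofFn P).drop i, ∀ r, 0 ≤ Q r := by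
    intro Q hQ r
    obtain ⟨j, rfl⟩ := List.mem_ofFn.mp (List.mem_of_mem_drop hQ)
    exact hP0 j r
  have h1 : ∀ Q ∈ (List.ofFn P).drop i, ∑ r : M, Q r = 1 := by
    intro Q hQ
    obtain ⟨j, rfl⟩ := List.mem_ofFn.mp (List.mem_of_mem_drop hQ)
    exact hP1 j
  rw [abs_sub_le_iff]
  exact ⟨dpVal_sub_le hk _ h0 h1 A B,
    (dpVal_sub_le hk _ h0 h1 B A).trans_eq (matchDist_symm B A)⟩
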